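/- Let α ∈ [0,2] be real, and set t := √((4 − α²)/(4 + α²)), μ := arctan(t), and θ := (1/2)·arcsin(t). Then α·cos(2θ) + 2·cos(μ) + 2·sin(μ)·sin(2θ) = √(8 + 2α²). In particular, sin(2θ) = t and cos(2θ) = α·√2/√(4 + α²). -/

import Mathlib

/-- With the optimal state angle `θ` and measurement angle `μ` of the tilted Bell inequality,
the quantum value `α·cos(2θ) + 2cos(μ) + 2sin(μ)sin(2θ)` equals `√(8 + 2α²)`; moreover
`sin(2θ) = t` and `cos(2θ) = α√2/√(4 + α²)`. -/
theorem stmt_8 (α : ℝ) (hα : α ∈ Set.Icc (0 : ℝ) 2)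
    (t μ θ : ℝ)
    (ht : t = Real.sqrt ((4 - α ^ 2) / (4 + α ^ 2)))
    (hμ : μ = Real.arctan t)
    (hθ : θ = (1 / 2) * Real.arcsin t) :
    α * Real.cos (2 * θ) + 2 * Real.cos μ + 2 * Real.sin μ * Real.sin (2 * θ)
        = Real.sqrt (8 + 2 * α ^ 2) ∧
    Real.sin (2 * θ) = t ∧
    Real.cos (2 * θ) = α * Real.sqrt 2 / Real.sqrt (4 + α ^ 2) := by
  obtain ⟨hα0, hα2⟩ := hα
  have h4 : (0:ℝ) < 4 + α ^ 2 := by positivity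
  have hnum : (0:ℝ) ≤ 4 - α ^ 2 := by nlinarith
  have ht0 : 0 ≤ t := ht ▸ Real.sqrt_nonneg _
  have ht2 : t ^ 2 = (4 - α ^ 2) / (4 + α ^ 2) := by
    rw [ht, Real.sq_sqrt (by positivity)]
  have ht2' : t ^ 2 * (4 + α ^ 2) = 4 - α ^ 2 := by
    rw [ht2]; field_simp
  have ht1 : t ≤ 1 := by nlinarith [ht2', sq_nonneg α]
  have h2θ : 2 * θ = Real.arcsin t := by rw [hθ]; ring
  have hsin : Real.sin (2 * θ) = t := by
    rw [h2θ, Real.sin_arcsin (by linarith) ht1]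
  set r := Real.sqrt (4 + α ^ 2) with hr
  have hr0 : 0 < r := Real.sqrt_pos.mpr h4
  have hr2 : r ^ 2 = 4 + α ^ 2 := Real.sq_sqrt (le_of_lt h4)
  have hs2 : Real.sqrt 2 ^ 2 = 2 := Real.sq_sqrt (by norm_num)
  have hs20 : (0:ℝ) < Real.sqrt 2 := Real.sqrt_pos.mpr (by norm_num)
  have hcos : Real.cos (2 * θ) = α * Real.sqrt 2 / r := by
    rw [h2θ, Real.cos_arcsin]
    rw [show 1 - t ^ 2 = (α * Real.sqrt 2 / r) ^ 2 by
      field_simp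
      nlinarith [ht2', hr2, hs2]]
    exact Real.sqrt_sq (by positivity)
  have h1t : Real.sqrt (1 + t ^ 2) = 2 * Real.sqrt 2 / r := by
    rw [show 1 + t ^ 2 = (2 * Real.sqrt 2 / r) ^ 2 by
      field_simp
      nlinarith [ht2', hr2, hs2]]
    exact Real.sqrt_sq (by positivity)
  have hcosμ : Real.cos μ = r / (2 * Real.sqrt 2) := by
    rw [hμ, Real.cos_arctan, h1t]
    field_simp
  have hsinμ : Real.sin μ = t * r / (2 * Real.sqrt 2) := by
    rw [hμ, Real.sin_arctan, h1t]
    field_simp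
  have hrhs : Real.sqrt (8 + 2 * α ^ 2) = Real.sqrt 2 * r := by
    rw [show (8 : ℝ) + 2 * α ^ 2 = (Real.sqrt 2 * r) ^ 2 by linear_combination (-2 : ℝ) * hr2 - r ^ 2 * hs2]
    exact Real.sqrt_sq (by positivity)
  refine ⟨?_, hsin, hcos⟩
  rw [hcos, hcosμ, hsinμ, hsin, hrhs]
  field_simp
  linear_combination (α ^ 2 - r ^ 2) * hs2 +
    (t ^ 2 - 1) * hr2 + ht2'
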